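/- arXiv:1306.4683 — 4 statements merged into one kernel-verified Lean document; each statement's English description precedes it below -/
import Mathlib

section
/- Let {ρ_i}_{i=1}^k be density matrices on a d-dimensional complex Hilbert space, prepared with probabilities p_i, and write ρ̃_i = p_i ρ_i. For a permutation ε of {1,…,k}, define N_ε iteratively by N_ε^{(2)} = min(ρ̃_{ε(2)}, ρ̃_{ε(1)}) and N_ε^{(j)} = min(ρ̃_{ε(j)}, N_ε^{(j−1)}) for 3 ≤ j ≤ k, and set N_ε = N_ε^{(k)}, where min(A,B) = (1/2)(A + B − |A−B|) and |X| = (X²)^{1/2}. Then for every measurement (POVM) {M_i}_{i=1}^k and every permutation ε, ∑_{i=1}^k tr(ρ̃_i M_i) ≥ tr(N_ε). (Theorem 3.) -/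
open Matrix BigOperators ComplexOrder Classical

/-- The positive semidefinite square root of a matrix (junk value `0` if the
matrix is not positive semidefinite). -/
noncomputable def psqrt {d : ℕ} (A : Matrix (Fin d) (Fin d) ℂ) :
    Matrix (Fin d) (Fin d) ℂ :=
  if h : A.PosSemidef then h.1.eigenvectorUnitary.1 * diagonal ((↑) ∘ (√·) ∘ h.1.eigenvalues) *
    (star h.1.eigenvectorUnitary : Matrix (Fin d) (Fin d) ℂ) else 0

/-- The matrix absolute value `|X| = (X²)^{1/2}` of a Hermitian matrix. -/
noncomputable def matAbs {d : ℕ} (X : Matrix (Fin d) (Fin d) ℂ) :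
    Matrix (Fin d) (Fin d) ℂ :=
  psqrt (X * X)

/-- The "minimum" `min(A,B) = (A + B - |A - B|)/2` of two Hermitian matrices. -/
noncomputable def matMin {d : ℕ} (A B : Matrix (Fin d) (Fin d) ℂ) :
    Matrix (Fin d) (Fin d) ℂ :=
  (1 / 2 : ℂ) • (A + B - matAbs (A - B))

/-- Iterated minimum: `iterMin [A_k, ..., A_1] = min(A_k, min(A_{k-1}, ..., min(A_2, A_1)))`. -/
noncomputable def iterMin {d : ℕ} : List (Matrix (Fin d) (Fin d) ℂ) → Matrix (Fin d) (Fin d) ℂ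
  | [] => 0
  | [A] => A
  | A :: rest => matMin A (iterMin rest)

lemma trace_re_nonneg {d : ℕ} {A : Matrix (Fin d) (Fin d) ℂ} (hA : A.PosSemidef) :
    0 ≤ A.trace.re := by
  have h : ∀ i, 0 ≤ A i i := fun i => by
    exact hA.diag_nonneg
  rw [Matrix.trace, Complex.re_sum]
  exact Finset.sum_nonneg fun i _ => by simpa using (Complex.le_def.mp (h i)).1

open scoped MatrixOrder in
lemma trace_mul_re_nonneg {d : ℕ} {A B : Matrix (Fin d) (Fin d) ℂ}
    (hA : A.PosSemidef) (hB : B.PosSemidef) : 0 ≤ (A * B).trace.re := by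
  have hS := (CFC.sqrt_nonneg A).posSemidef
  have h1 : A * B = CFC.sqrt A * (CFC.sqrt A * B) := by
    rw [← mul_assoc, CFC.sqrt_mul_sqrt_self A hA.nonneg]
  rw [h1, Matrix.trace_mul_comm]
  have h2 : (CFC.sqrt A * B * CFC.sqrt A).PosSemidef := by
    have h3 := hB.mul_mul_conjTranspose_same (CFC.sqrt A)
    rwa [hS.1.eq] at h3
  exact trace_re_nonneg h2

open scoped MatrixOrder in
lemma matAbs_key {d : ℕ} {X : Matrix (Fin d) (Fin d) ℂ} (hX : X.IsHermitian) :
    (matAbs X).IsHermitian ∧ (matAbs X - X).PosSemidef ∧ (matAbs X + X).PosSemidef := by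
  have hXX : (X * X).PosSemidef := by
    have := posSemidef_self_mul_conjTranspose X
    rwa [hX.eq] at this
  set U : Matrix (Fin d) (Fin d) ℂ := (hX.eigenvectorUnitary : Matrix (Fin d) (Fin d) ℂ) with hU
  have hUU : star U * U = 1 := (Matrix.mem_unitaryGroup_iff').mp hX.eigenvectorUnitary.2
  set lam := hX.eigenvalues with hlam
  have hspec : X = U * diagonal (RCLike.ofReal ∘ lam) * star U := hX.spectral_theorem
  set S : Matrix (Fin d) (Fin d) ℂ := U * diagonal (fun i => ((|lam i| : ℝ) : ℂ)) * star U
    with hSdef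
  have hdiagmul : ∀ (f g : Fin d → ℂ),
      (U * diagonal f * star U) * (U * diagonal g * star U) = U * diagonal (f * g) * star U := by
    intro f g
    simp only [mul_assoc]
    rw [← mul_assoc (star U) U, hUU, one_mul, ← mul_assoc (diagonal f), diagonal_mul_diagonal]
    rfl
  have hSpsd : S.PosSemidef := by
    have hd : (diagonal (fun i => ((|lam i| : ℝ) : ℂ))).PosSemidef :=
      PosSemidef.diagonal fun i => Complex.zero_le_real.mpr (abs_nonneg (lam i))
    have := hd.mul_mul_conjTranspose_same U
    rwa [← Matrix.star_eq_conjTranspose] at this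
  have hSsq : S ^ 2 = X * X := by
    have hfun : ((fun i => ((|lam i| : ℝ) : ℂ)) * fun i => ((|lam i| : ℝ) : ℂ)) =
        (RCLike.ofReal ∘ lam * RCLike.ofReal ∘ lam) := by
      funext i
      simp only [Pi.mul_apply, Function.comp_apply, RCLike.ofReal, Complex.coe_algebraMap]
      rw [← Complex.ofReal_mul, ← Complex.ofReal_mul, abs_mul_abs_self]
    rw [pow_two, hSdef, hdiagmul]
    conv_rhs => rw [hspec, hdiagmul]
    rw [hfun]
  have hSabs : matAbs X = S := by
    rw [matAbs, psqrt, dif_pos hXX]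
    refine Eq.trans ?_ (CFC.sqrt_unique (a := X * X) (b := S) (by rw [← pow_two]; exact hSsq)
      hSpsd.nonneg)
    rw [CFC.sqrt_eq_real_sqrt _ hXX.nonneg, cfcₙ_eq_cfc (hf0 := Real.sqrt_zero), hXX.1.cfc_eq]
    rfl
  have hsub : matAbs X - X = U * diagonal (fun i => ((|lam i| - lam i : ℝ) : ℂ)) * star U := by
    rw [hSabs, hSdef]
    conv_lhs => rw [hspec]
    rw [← sub_mul, ← Matrix.mul_sub, diagonal_sub]
    congr 2
    funext i
    simp [Function.comp, Complex.ofReal_sub]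
  have hadd : matAbs X + X = U * diagonal (fun i => ((|lam i| + lam i : ℝ) : ℂ)) * star U := by
    rw [hSabs, hSdef]
    conv_lhs => rw [hspec]
    rw [← add_mul, ← Matrix.mul_add, diagonal_add]
    congr 2
    funext i
    simp [Function.comp, Complex.ofReal_add]
  refine ⟨hSabs ▸ hSpsd.1, ?_, ?_⟩
  · rw [hsub]
    have hd : (diagonal (fun i => ((|lam i| - lam i : ℝ) : ℂ))).PosSemidef :=
      PosSemidef.diagonal fun i =>
        Complex.zero_le_real.mpr (by linarith [le_abs_self (lam i)])
    have := hd.mul_mul_conjTranspose_same U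
    rwa [← Matrix.star_eq_conjTranspose] at this
  · rw [hadd]
    have hd : (diagonal (fun i => ((|lam i| + lam i : ℝ) : ℂ))).PosSemidef :=
      PosSemidef.diagonal fun i =>
        Complex.zero_le_real.mpr (by linarith [neg_abs_le (lam i)])
    have := hd.mul_mul_conjTranspose_same U
    rwa [← Matrix.star_eq_conjTranspose] at this

lemma smul_posSemidef {d : ℕ} {A : Matrix (Fin d) (Fin d) ℂ} (hA : A.PosSemidef)
    {c : ℝ} (hc : 0 ≤ c) : ((c : ℂ) • A).PosSemidef := by
  refine PosSemidef.of_dotProduct_mulVec_nonneg ?_ ?_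
  · unfold Matrix.IsHermitian
    rw [conjTranspose_smul, hA.1.eq]
    simp
  · intro x
    have := hA.dotProduct_mulVec_nonneg x
    rw [smul_mulVec, dotProduct_smul]
    exact smul_nonneg (by exact_mod_cast hc) this

lemma half_smul_psd {d : ℕ} {A : Matrix (Fin d) (Fin d) ℂ} (hA : A.PosSemidef) :
    ((1/2 : ℂ) • A).PosSemidef := by
  have h : ((1/2 : ℝ) : ℂ) = (1/2 : ℂ) := by norm_num
  simpa [h] using smul_posSemidef hA (c := 1/2) (by norm_num)

lemma matMin_hermitian {d : ℕ} {A B : Matrix (Fin d) (Fin d) ℂ}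
    (hA : A.IsHermitian) (hB : B.IsHermitian) : (matMin A B).IsHermitian := by
  have habs := (matAbs_key (hA.sub hB)).1
  unfold Matrix.IsHermitian matMin
  rw [conjTranspose_smul, conjTranspose_sub, conjTranspose_add, hA.eq, hB.eq, habs.eq]
  norm_num

lemma sub_matMin_left {d : ℕ} {A B : Matrix (Fin d) (Fin d) ℂ}
    (hA : A.IsHermitian) (hB : B.IsHermitian) : (A - matMin A B).PosSemidef := by
  have habs := (matAbs_key (hA.sub hB)).2.2
  have heq : A - matMin A B = (1/2 : ℂ) • (matAbs (A - B) + (A - B)) := by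
    unfold matMin
    rw [smul_add]
    module
  rw [heq]
  exact half_smul_psd habs

lemma sub_matMin_right {d : ℕ} {A B : Matrix (Fin d) (Fin d) ℂ}
    (hA : A.IsHermitian) (hB : B.IsHermitian) : (B - matMin A B).PosSemidef := by
  have habs := (matAbs_key (hA.sub hB)).2.1
  have heq : B - matMin A B = (1/2 : ℂ) • (matAbs (A - B) - (A - B)) := by
    unfold matMin
    rw [smul_sub]
    module
  rw [heq]
  exact half_smul_psd habs

lemma iterMin_key {d : ℕ} : ∀ (L : List (Matrix (Fin d) (Fin d) ℂ)),
    (∀ A ∈ L, A.IsHermitian) →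
    (iterMin L).IsHermitian ∧ ∀ A ∈ L, (A - iterMin L).PosSemidef
  | [], _ => ⟨Matrix.isHermitian_zero, by simp⟩
  | [A], h => by
    refine ⟨h A (by simp), ?_⟩
    intro B hB
    simp only [List.mem_singleton] at hB
    subst hB
    simp only [iterMin, sub_self]
    exact Matrix.PosSemidef.zero
  | A :: B :: rest, h => by
    have hA : A.IsHermitian := h A (by simp)
    have hrest : ∀ C ∈ B :: rest, C.IsHermitian := fun C hC => h C (List.mem_cons_of_mem _ hC)
    obtain ⟨hNh, hNle⟩ := iterMin_key (B :: rest) hrest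
    have hmin : iterMin (A :: B :: rest) = matMin A (iterMin (B :: rest)) := rfl
    refine ⟨hmin ▸ matMin_hermitian hA hNh, ?_⟩
    intro C hC
    rw [hmin]
    rcases List.mem_cons.mp hC with hC | hC
    · subst hC
      exact sub_matMin_left hA hNh
    · have h1 := hNle C hC
      have h2 := sub_matMin_right hA hNh
      have heq : C - matMin A (iterMin (B :: rest)) =
          (C - iterMin (B :: rest)) + (iterMin (B :: rest) - matMin A (iterMin (B :: rest))) := by
        abel
      rw [heq]
      exact h1.add h2

/-- Theorem 3: lower bound on the error probability of state exclusion.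
`N_ε = min(ρ̃_{ε(k)}, min(ρ̃_{ε(k-1)}, ..., min(ρ̃_{ε(2)}, ρ̃_{ε(1)})))`. -/
theorem state_exclusion_min_lower_bound
    {d k : ℕ} (ρ : Fin k → Matrix (Fin d) (Fin d) ℂ)
    (hρ : ∀ i, (ρ i).PosSemidef) (hρtr : ∀ i, (ρ i).trace = 1)
    (p : Fin k → ℝ) (hp : ∀ i, 0 ≤ p i) (hpsum : ∑ i, p i = 1)
    (M : Fin k → Matrix (Fin d) (Fin d) ℂ)
    (hM : ∀ i, (M i).PosSemidef) (hMsum : ∑ i, M i = 1)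
    (ε : Equiv.Perm (Fin k)) :
    (iterMin ((List.finRange k).reverse.map (fun i => (p (ε i) : ℂ) • ρ (ε i)))).trace.re ≤
      (∑ i, ((p i : ℂ) • ρ i * M i).trace).re := by
  set L := (List.finRange k).reverse.map (fun i => (p (ε i) : ℂ) • ρ (ε i)) with hL
  have hherm : ∀ A ∈ L, A.IsHermitian := by
    intro A hA
    rw [hL, List.mem_map] at hA
    obtain ⟨i, _, rfl⟩ := hA
    exact (smul_posSemidef (hρ (ε i)) (hp (ε i))).1
  obtain ⟨hNh, hNle⟩ := iterMin_key L hherm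
  set N := iterMin L with hN
  have hmem : ∀ j : Fin k, ((p j : ℂ) • ρ j) ∈ L := by
    intro j
    rw [hL, List.mem_map]
    exact ⟨ε⁻¹ j, by simp, by simp⟩
  have htr : N.trace = ∑ j, (N * M j).trace := by
    calc N.trace = (N * 1).trace := by rw [mul_one]
    _ = (N * ∑ j, M j).trace := by rw [hMsum]
    _ = ∑ j, (N * M j).trace := by rw [Finset.mul_sum, Matrix.trace_sum]
  rw [htr, Complex.re_sum, Complex.re_sum]
  apply Finset.sum_le_sum
  intro j _
  have hkey := trace_mul_re_nonneg (hNle _ (hmem j)) (hM j)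
  rw [sub_mul, Matrix.trace_sub, Complex.sub_re] at hkey
  linarith
end

section
/- Let n ≥ 1 and 0 ≤ θ < π/2 with tan(θ/2) < 2^{1/n} − 1. With Ψ_x ∈ ℂ^{2^n} defined by Ψ_x(r) = (−1)^{x·r} cos(θ/2)^{n−|r|} sin(θ/2)^{|r|}, and N the diagonal 2^n × 2^n matrix with entry C(θ) at index 0⃗ and entry −C(θ) tan(θ/2)^{|r|} at each index r ≠ 0⃗, where C(θ) = 2^{−n} cos(θ/2)^{2n} (2 − (1 + tan(θ/2))^n), the matrix 2^{−n} |Ψ_x⟩⟨Ψ_x| − N is positive semidefinite for every x ∈ {0,1}^n. (Feasibility of the dual certificate in the PBR game.) -/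
open BigOperators Matrix ComplexOrder

/-- The dot product `x·r = ∑ᵢ xᵢ rᵢ` of two bit strings. -/
def bdot {n : ℕ} (x r : Fin n → Bool) : ℕ :=
  ∑ i, if x i ∧ r i then 1 else 0

/-- The Hamming weight `|r| = ∑ᵢ rᵢ` of a bit string. -/
def hamming {n : ℕ} (r : Fin n → Bool) : ℕ :=
  ∑ i, if r i then 1 else 0

lemma hamming_le {n : ℕ} (r : Fin n → Bool) : hamming r ≤ n := by
  calc hamming r ≤ ∑ _i : Fin n, 1 := Finset.sum_le_sum (fun i _ => by split <;> simp)
  _ = n := by simp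

lemma hamming_zero {n : ℕ} : hamming (fun _ => false : Fin n → Bool) = 0 := by
  simp [hamming]

lemma bdot_zero {n : ℕ} (x : Fin n → Bool) :
    bdot x (fun _ => false) = 0 := by simp [bdot]

lemma conj_mul_real (a : ℝ) (w : ℂ) :
    (starRingEnd ℂ) w * ((a : ℂ) * w) = ((a * Complex.normSq w : ℝ) : ℂ) := by
  have h : (starRingEnd ℂ) w * ((a : ℂ) * w) = (a : ℂ) * (w * (starRingEnd ℂ) w) := by ring
  rw [h, Complex.mul_conj]
  push_cast
  ring

/-- The key scalar inequality. -/
lemma core_ineq (K W : ℝ) (z S : ℂ) (hK0 : 0 ≤ K) (hK1 : K ≤ 1) (hW : 0 ≤ W)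
    (hCS : Complex.normSq S ≤ K * W) (hS0 : K = 0 → S = 0) :
    0 ≤ Complex.normSq (z + S) - (1 - K) * Complex.normSq z + (1 - K) * W := by
  rcases eq_or_lt_of_le hK0 with h0 | hKpos
  · have hS : S = 0 := hS0 h0.symm
    subst hS
    simp only [add_zero, ← h0]
    linarith
  · have key : K * (Complex.normSq (z + S) - (1 - K) * Complex.normSq z + (1 - K) * W)
        = Complex.normSq ((K : ℂ) * z + S) + (1 - K) * (K * W - Complex.normSq S) := by
      rw [Complex.normSq_add, Complex.normSq_add, Complex.normSq_mul,
        Complex.normSq_ofReal]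
      have h2 : ((K : ℂ) * z * (starRingEnd ℂ) S).re = K * (z * (starRingEnd ℂ) S).re := by
        rw [mul_assoc, Complex.re_ofReal_mul]
      rw [h2]
      ring
    nlinarith [Complex.normSq_nonneg ((K : ℂ) * z + S)]

/-- Sum of `t^|r|` over all bit strings. -/
lemma sum_pow_hamming {n : ℕ} (t : ℝ) :
    ∑ r : Fin n → Bool, t ^ hamming r = (1 + t) ^ n := by
  have h1 : (1 + t) ^ n = ∏ _i : Fin n, ∑ b : Bool, (if b then t else 1) := by
    simp [Fintype.sum_bool, add_comm]
  rw [h1, Finset.prod_univ_sum, Fintype.piFinset_univ]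
  refine Finset.sum_congr rfl (fun r _ => ?_)
  rw [hamming, ← Finset.prod_pow_eq_pow_sum]
  exact Finset.prod_congr rfl (fun i _ => by split <;> simp)

/-- Feasibility of the dual certificate in the PBR game: when
`tan(θ/2) < 2^{1/n} - 1`, the matrix `2^{-n}|Ψₓ⟩⟨Ψₓ| - N` is positive
semidefinite for every `x`, where `N` is the diagonal matrix with entry `C(θ)`
at `0⃗` and `-C(θ) tan(θ/2)^{|r|}` at each `r ≠ 0⃗`. -/
theorem pbr_dual_certificate_feasible
    {n : ℕ} (hn : 1 ≤ n) (θ : ℝ) (hθ0 : 0 ≤ θ) (hθ1 : θ < Real.pi / 2)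
    (hθ2 : Real.tan (θ / 2) < (2 : ℝ) ^ ((n : ℝ)⁻¹) - 1)
    (Ψ : (Fin n → Bool) → (Fin n → Bool) → ℂ)
    (hΨ : ∀ x r, Ψ x r = (-1 : ℂ) ^ bdot x r *
      ((Real.cos (θ / 2) ^ (n - hamming r) * Real.sin (θ / 2) ^ hamming r : ℝ) : ℂ))
    (C : ℝ)
    (hC : C = (2 ^ n : ℝ)⁻¹ * Real.cos (θ / 2) ^ (2 * n) *
      (2 - (1 + Real.tan (θ / 2)) ^ n))
    (N : Matrix (Fin n → Bool) (Fin n → Bool) ℂ)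
    (hN : N = Matrix.diagonal (fun r =>
      if r = (fun _ => false) then (C : ℂ)
      else -(C : ℂ) * ((Real.tan (θ / 2) ^ hamming r : ℝ) : ℂ))) :
    ∀ x : Fin n → Bool,
      (((2 : ℂ) ^ n)⁻¹ •
        Matrix.vecMulVec (Ψ x) (fun q => (starRingEnd ℂ) (Ψ x q)) - N).PosSemidef := by
  intro x
  set t := Real.tan (θ / 2) with ht_def
  set c := Real.cos (θ / 2) with hc_def
  have hπ : 0 < Real.pi := Real.pi_pos
  have hθhalf0 : 0 ≤ θ / 2 := by linarith
  have hθhalf1 : θ / 2 < Real.pi / 2 := by linarith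
  have hcpos : 0 < c := Real.cos_pos_of_mem_Ioo ⟨by linarith, hθhalf1⟩
  have ht0 : 0 ≤ t := by
    rw [ht_def, Real.tan_eq_sin_div_cos]
    exact div_nonneg (Real.sin_nonneg_of_nonneg_of_le_pi hθhalf0 (by linarith)) hcpos.le
  have hsin : Real.sin (θ / 2) = c * t := by
    rw [ht_def, Real.tan_eq_sin_div_cos]
    field_simp
    rw [mul_div_assoc, div_self hcpos.ne', mul_one]
  have hn0 : (n : ℝ) ≠ 0 := by positivity
  -- (1+t)^n < 2
  have h2n : (1 + t) ^ n < 2 := by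
    have h1 : 1 + t < (2 : ℝ) ^ ((n : ℝ)⁻¹) := by linarith
    have h2 : (1 + t) ^ n < ((2 : ℝ) ^ ((n : ℝ)⁻¹)) ^ n :=
      pow_lt_pow_left₀ h1 (by linarith) (by omega)
    have h3 : ((2 : ℝ) ^ ((n : ℝ)⁻¹)) ^ n = 2 := by
      rw [← Real.rpow_natCast ((2 : ℝ) ^ ((n : ℝ)⁻¹)) n, ← Real.rpow_mul (by norm_num),
        inv_mul_cancel₀ hn0, Real.rpow_one]
    linarith [h3 ▸ h2]
  -- rewrite Ψ entries as real casts
  have hΨ' : ∀ r, Ψ x r = (((-1 : ℝ) ^ bdot x r * (c ^ n * t ^ hamming r) : ℝ) : ℂ) := by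
    intro r
    rw [hΨ]
    have hexp : c ^ (n - hamming r) * Real.sin (θ / 2) ^ hamming r
        = c ^ n * t ^ hamming r := by
      rw [hsin, mul_pow, ← mul_assoc, ← pow_add, Nat.sub_add_cancel (hamming_le r)]
    rw [hexp]
    push_cast
    ring
  set z0 : Fin n → Bool := (fun _ => false) with hz0
  have hhz : hamming z0 = 0 := by rw [hz0]; exact hamming_zero
  have hbz : bdot x z0 = 0 := by rw [hz0]; exact bdot_zero x
  -- Abbreviations
  set K : ℝ := ∑ r ∈ Finset.univ.erase z0, t ^ hamming r with hK_def
  have hKsum : K + 1 = (1 + t) ^ n := by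
    have h := Finset.sum_erase_add Finset.univ (fun r : Fin n → Bool => t ^ hamming r)
      (Finset.mem_univ z0)
    rw [hK_def, ← sum_pow_hamming (n := n) t, ← h, hhz, pow_zero]
  have hK0 : 0 ≤ K := Finset.sum_nonneg (fun r _ => pow_nonneg ht0 _)
  have hK1 : K ≤ 1 := by linarith
  have hCval : C = (2 ^ n : ℝ)⁻¹ * c ^ (2 * n) * (1 - K) := by
    rw [hC]; congr 1; linarith
  have hsa : ∀ r : ℝ, _root_.IsSelfAdjoint ((r : ℝ) : ℂ) :=
    fun r => Complex.conj_ofReal r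
  rw [Matrix.posSemidef_iff_dotProduct_mulVec]
  constructor
  · -- Hermitian
    apply Matrix.IsHermitian.sub
    · show _ = _
      ext i j
      simp only [Matrix.conjTranspose_apply, Matrix.smul_apply, Matrix.vecMulVec_apply,
        smul_eq_mul, star_mul', hΨ', Complex.star_def, Complex.conj_ofReal, _root_.map_mul,
        map_inv₀, map_pow, map_ofNat, Complex.conj_conj, _root_.map_one, map_neg]
      ring
    · rw [hN, Matrix.isHermitian_diagonal_iff]
      intro i
      split
      · exact hsa C
      · exact ((hsa C).neg).mul (hsa _)
  · -- positivity of the quadratic form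
    intro v
    set T : ℂ := ∑ r, Ψ x r * v r with hT_def
    set S : ℂ := ∑ r ∈ Finset.univ.erase z0,
      (((-1 : ℝ) ^ bdot x r * t ^ hamming r : ℝ) : ℂ) * v r with hS_def
    set W : ℝ := ∑ r ∈ Finset.univ.erase z0, t ^ hamming r * Complex.normSq (v r)
      with hW_def
    have hW0 : 0 ≤ W :=
      Finset.sum_nonneg (fun r _ => mul_nonneg (pow_nonneg ht0 _) (Complex.normSq_nonneg _))
    -- Step 1: compute the quadratic form
    have hform : star v ⬝ᵥ ((((2 : ℂ) ^ n)⁻¹ •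
        Matrix.vecMulVec (Ψ x) (fun q => (starRingEnd ℂ) (Ψ x q)) - N) *ᵥ v)
        = (((2 ^ n : ℝ)⁻¹ * Complex.normSq T
            - (C * Complex.normSq (v z0) - C * W) : ℝ) : ℂ) := by
      rw [Matrix.sub_mulVec, dotProduct_sub, Matrix.smul_mulVec,
        dotProduct_smul]
      have hA : star v ⬝ᵥ (Matrix.vecMulVec (Ψ x) (fun q => (starRingEnd ℂ) (Ψ x q)) *ᵥ v)
          = (starRingEnd ℂ) T * T := by
        have hTconj : (starRingEnd ℂ) T = ∑ r, (starRingEnd ℂ) (v r) * Ψ x r := by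
          rw [hT_def, map_sum]
          refine Finset.sum_congr rfl (fun r _ => ?_)
          rw [_root_.map_mul, hΨ' r, Complex.conj_ofReal, mul_comm]
        have hmv : ∀ i, (Matrix.vecMulVec (Ψ x) (fun q => (starRingEnd ℂ) (Ψ x q)) *ᵥ v) i
            = Ψ x i * T := by
          intro i
          simp only [Matrix.mulVec, Matrix.vecMulVec_apply, dotProduct, hT_def,
            Finset.mul_sum]
          refine Finset.sum_congr rfl (fun r _ => ?_)
          rw [hΨ' r, Complex.conj_ofReal]
          ring
        simp only [dotProduct, hmv, Pi.star_apply, Complex.star_def]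
        rw [hTconj, Finset.sum_mul]
        refine Finset.sum_congr rfl (fun r _ => ?_)
        ring
      rw [hA, hN]
      have hB : star v ⬝ᵥ (Matrix.diagonal (fun r =>
          if r = z0 then (C : ℂ)
          else -(C : ℂ) * ((t ^ hamming r : ℝ) : ℂ)) *ᵥ v)
          = ((C * Complex.normSq (v z0) - C * W : ℝ) : ℂ) := by
        simp only [dotProduct, Matrix.mulVec_diagonal, Pi.star_apply, Complex.star_def]
        have hterm : ∀ r : Fin n → Bool,
            (starRingEnd ℂ) (v r) * ((if r = z0 then (C : ℂ)
              else -(C : ℂ) * ((t ^ hamming r : ℝ) : ℂ)) * v r)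
            = (((if r = z0 then C else -(C * t ^ hamming r)) * Complex.normSq (v r) : ℝ) : ℂ) := by
          intro r
          split
          · exact conj_mul_real C (v r)
          · rw [← conj_mul_real (-(C * t ^ hamming r)) (v r)]
            push_cast
            ring
        rw [Finset.sum_congr rfl (fun r _ => hterm r)]
        rw [← Complex.ofReal_sum]
        congr 1
        rw [← Finset.sum_erase_add Finset.univ _ (Finset.mem_univ z0)]
        have hrest : ∑ r ∈ Finset.univ.erase z0,
            (if r = z0 then C else -(C * t ^ hamming r)) * Complex.normSq (v r)
            = -(C * W) := by
          rw [hW_def, Finset.mul_sum, ← Finset.sum_neg_distrib]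
          refine Finset.sum_congr rfl (fun r hr => ?_)
          rw [if_neg (Finset.ne_of_mem_erase hr)]
          ring
        rw [hrest, if_pos rfl]
        ring
      rw [hB]
      have hTT : (starRingEnd ℂ) T * T = ((Complex.normSq T : ℝ) : ℂ) := by
        rw [mul_comm, Complex.mul_conj]
      rw [hTT, smul_eq_mul]
      push_cast
      ring
    rw [hform]
    rw [Complex.zero_le_real]
    -- Step 2: T = c^n * (z + S)
    have hT : T = ((c ^ n : ℝ) : ℂ) * (v z0 + S) := by
      rw [hT_def, ← Finset.sum_erase_add Finset.univ _ (Finset.mem_univ z0)]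
      have h0term : Ψ x z0 * v z0 = ((c ^ n : ℝ) : ℂ) * v z0 := by
        rw [hΨ' z0, hbz, hhz]
        norm_num
      have hSterm : ∑ r ∈ Finset.univ.erase z0, Ψ x r * v r = ((c ^ n : ℝ) : ℂ) * S := by
        rw [hS_def, Finset.mul_sum]
        refine Finset.sum_congr rfl (fun r _ => ?_)
        rw [hΨ' r]
        push_cast
        ring
      rw [h0term, hSterm]
      ring
    have hnormT : Complex.normSq T = c ^ (2 * n) * Complex.normSq (v z0 + S) := by
      rw [hT, Complex.normSq_mul, Complex.normSq_ofReal, ← pow_add, two_mul]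
    -- Step 3: Cauchy–Schwarz : normSq S ≤ K * W
    have hCS : Complex.normSq S ≤ K * W := by
      have h1 : ‖S‖ ≤ ∑ r ∈ Finset.univ.erase z0, t ^ hamming r * ‖v r‖ := by
        refine le_trans (norm_sum_le _ _) (le_of_eq ?_)
        refine Finset.sum_congr rfl (fun r _ => ?_)
        rw [norm_mul, Complex.norm_real, Real.norm_eq_abs]
        congr 1
        rw [abs_mul, abs_pow, abs_pow, abs_neg, abs_one, one_pow, one_mul,
          abs_of_nonneg ht0]
      have h2 : (∑ r ∈ Finset.univ.erase z0, t ^ hamming r * ‖v r‖) ^ 2 ≤ K * W := by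
        have hcs := Finset.sum_mul_sq_le_sq_mul_sq (Finset.univ.erase z0)
          (fun r => Real.sqrt (t ^ hamming r))
          (fun r => Real.sqrt (t ^ hamming r) * ‖v r‖)
        have e1 : ∀ r ∈ Finset.univ.erase z0,
            Real.sqrt (t ^ hamming r) * (Real.sqrt (t ^ hamming r) * ‖v r‖)
            = t ^ hamming r * ‖v r‖ := by
          intro r _
          rw [← mul_assoc, Real.mul_self_sqrt (pow_nonneg ht0 _)]
        have e2 : ∀ r ∈ Finset.univ.erase z0,
            Real.sqrt (t ^ hamming r) ^ 2 = t ^ hamming r := by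
          intro r _
          exact Real.sq_sqrt (pow_nonneg ht0 _)
        have e3 : ∀ r ∈ Finset.univ.erase z0,
            (Real.sqrt (t ^ hamming r) * ‖v r‖) ^ 2
            = t ^ hamming r * Complex.normSq (v r) := by
          intro r _
          rw [mul_pow, Real.sq_sqrt (pow_nonneg ht0 _), Complex.normSq_eq_norm_sq]
        rw [Finset.sum_congr rfl e1, Finset.sum_congr rfl e2, Finset.sum_congr rfl e3]
          at hcs
        exact hcs
      calc Complex.normSq S = ‖S‖ ^ 2 := by
            rw [Complex.normSq_eq_norm_sq]
        _ ≤ (∑ r ∈ Finset.univ.erase z0, t ^ hamming r * ‖v r‖) ^ 2 :=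
            pow_le_pow_left₀ (norm_nonneg _) h1 2
        _ ≤ K * W := h2
    -- Step 4: K = 0 → S = 0
    have hS0 : K = 0 → S = 0 := by
      intro hK
      have hall : ∀ r ∈ Finset.univ.erase z0, t ^ hamming r = 0 := by
        rw [hK_def] at hK
        exact (Finset.sum_eq_zero_iff_of_nonneg (fun r _ => pow_nonneg ht0 _)).mp hK
      rw [hS_def]
      refine Finset.sum_eq_zero (fun r hr => ?_)
      rw [hall r hr]
      simp
    -- Finish with the core inequality
    have hcore := core_ineq K W (v z0) S hK0 hK1 hW0 hCS hS0
    rw [hnormT, hCval]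
    have ha : 0 < (2 ^ n : ℝ)⁻¹ * c ^ (2 * n) := by positivity
    nlinarith [hcore, ha]
end

section
/- Let n ≥ 1 and 0 ≤ θ < π/2 with tan(θ/2) < 2^{1/n} − 1. With Ψ_x ∈ ℂ^{2^n} defined by Ψ_x(r) = (−1)^{x·r} cos(θ/2)^{n−|r|} sin(θ/2)^{|r|}, for every measurement (POVM) {M_x}_{x∈{0,1}^n} on ℂ^{2^n} one has ∑_{x∈{0,1}^n} 2^{−n} ⟨Ψ_x| M_x |Ψ_x⟩ ≥ 2^{−n} cos(θ/2)^{2n} (2 − (1 + tan(θ/2))^n)² > 0. In particular, conclusive exclusion of the states {Ψ_x} is impossible when tan(θ/2) < 2^{1/n} − 1, and the projective measurement {|ζ_x⟩⟨ζ_x|}, with ζ_x(0⃗) = 1/√(2^n) and ζ_x(r) = −(−1)^{x·r}/√(2^n) for r ≠ 0⃗, attains this bound with equality and is therefore optimal. (Quantum bound for the PBR game.) -/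
open BigOperators Matrix ComplexOrder

lemma sum_prod_bool {n : ℕ} {R : Type*} [CommSemiring R] (g : Fin n → Bool → R) :
    ∑ x : Fin n → Bool, ∏ i, g i (x i) = ∏ i, (g i false + g i true) := by
  have h := Finset.prod_univ_sum (fun _ : Fin n => (Finset.univ : Finset Bool)) (fun i b => g i b)
  rw [Fintype.piFinset_univ] at h
  rw [← h]
  exact Finset.prod_congr rfl fun i _ => by
    rw [Fintype.sum_bool]; exact add_comm _ _

lemma prod_ite_eq_pow {n : ℕ} (c s : ℝ) (r : Fin n → Bool) :
    (∏ i, (if r i then s else c)) = c ^ (n - hamming r) * s ^ hamming r := by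
  rw [Finset.prod_ite]
  simp only [Finset.prod_const]
  have h1 : (Finset.univ.filter fun i => r i = true).card = hamming r := by
    rw [Finset.card_filter]; rfl
  have h2 : (Finset.univ.filter fun i => ¬ (r i = true)).card = n - hamming r := by
    have h3 := Finset.card_filter_add_card_filter_not
      (s := (Finset.univ : Finset (Fin n))) (p := fun i => r i = true)
    rw [Finset.card_univ, Fintype.card_fin] at h3
    omega
  rw [h1, h2, mul_comm]

lemma sum_neg_one_pow_bdot {n : ℕ} (p q : Fin n → Bool) :
    ∑ x : Fin n → Bool, ((-1 : ℂ) ^ bdot x p * (-1 : ℂ) ^ bdot x q) =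
      if p = q then (2 : ℂ) ^ n else 0 := by
  have h1 : ∀ x : Fin n → Bool, (-1 : ℂ) ^ bdot x p * (-1 : ℂ) ^ bdot x q
      = ∏ i, ((-1 : ℂ) ^ (if x i ∧ p i then 1 else 0)
          * (-1 : ℂ) ^ (if x i ∧ q i then 1 else 0)) := by
    intro x
    rw [Finset.prod_mul_distrib, Finset.prod_pow_eq_pow_sum, Finset.prod_pow_eq_pow_sum]
    rfl
  simp only [h1]
  rw [sum_prod_bool (fun i b => (-1:ℂ)^(if b ∧ p i then 1 else 0)
      * (-1:ℂ)^(if b ∧ q i then 1 else 0))]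
  have h2 : ∀ i, ((-1:ℂ)^(if false ∧ p i then 1 else 0) * (-1:ℂ)^(if false ∧ q i then 1 else 0)
      + (-1:ℂ)^(if true ∧ p i then 1 else 0) * (-1:ℂ)^(if true ∧ q i then 1 else 0))
      = if p i = q i then (2:ℂ) else 0 := by
    intro i
    cases hp : p i <;> cases hq : q i <;> norm_num [hp, hq]
  rw [Finset.prod_congr rfl fun i _ => h2 i]
  by_cases hpq : p = q
  · subst hpq
    simp [Finset.prod_const]
  · obtain ⟨i, hi⟩ : ∃ i, p i ≠ q i := by
      by_contra h
      push_neg at h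
      exact hpq (funext h)
    rw [Finset.prod_eq_zero (Finset.mem_univ i) (by simp [hi]), if_neg hpq]

lemma key_ineq (p S T a B L : ℝ) (hp : 0 < p) (hS : 0 ≤ S) (hT : 0 ≤ T)
    (ha : 0 ≤ a) (hB : 0 ≤ B) (hL : 0 ≤ L) (hL2 : a - B ≤ L)
    (hCS : B ^ 2 ≤ S * T) (hSp : S ≤ p) :
    (p - S) * (a ^ 2 - p * T) ≤ p * L ^ 2 := by
  rcases le_or_gt a B with h | h
  · have h1 : a ^ 2 ≤ p * T := by nlinarith
    nlinarith [mul_nonneg hp.le (sq_nonneg L), sub_nonneg.2 hSp]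
  · have hL' : (a - B) ^ 2 ≤ L ^ 2 := by nlinarith
    rcases eq_or_lt_of_le hS with hS0 | hS0
    · have hB0 : B = 0 := by nlinarith
      subst hB0
      rw [← hS0]
      nlinarith [mul_nonneg (mul_nonneg hp.le hp.le) hT,
        mul_le_mul_of_nonneg_left hL' hp.le]
    · have key : S * ((p - S) * (a ^ 2 - p * T)) ≤ S * (p * (a - B) ^ 2) := by
        nlinarith [sq_nonneg (S * a - p * B),
          mul_nonneg (mul_nonneg hp.le (sub_nonneg.2 hSp)) (sub_nonneg.2 hCS)]
      have := le_of_mul_le_mul_left key hS0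
      nlinarith [mul_nonneg hp.le (sub_nonneg.2 hL')]

open BigOperators Matrix ComplexOrder

lemma core_ineq_s17 {n : ℕ} (ψ : (Fin n → Bool) → ℝ) (hψ : ∀ r, 0 ≤ ψ r)
    (hψ0 : 0 < ψ (fun _ => false))
    (hsum : (∑ r, ψ r) ≤ 2 * ψ (fun _ => false))
    (sgn : (Fin n → Bool) → ℂ) (hsgn : ∀ w, ‖sgn w‖ = 1)
    (v : (Fin n → Bool) → ℂ) :
    (2 * ψ (fun _ => false) - ∑ r, ψ r) *
      (ψ (fun _ => false) * ‖v (fun _ => false)‖ ^ 2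
        - ∑ w ∈ Finset.univ.erase (fun _ => false), ψ w * ‖v w‖ ^ 2)
      ≤ ‖∑ w, sgn w * (ψ w : ℂ) * v w‖ ^ 2 := by
  classical
  set z0 : Fin n → Bool := fun _ => false with hz0
  set S : ℝ := ∑ w ∈ Finset.univ.erase z0, ψ w with hSdef
  set B : ℝ := ∑ w ∈ Finset.univ.erase z0, ψ w * ‖v w‖ with hBdef
  set T : ℝ := ∑ w ∈ Finset.univ.erase z0, ψ w * ‖v w‖ ^ 2 with hTdef
  set L : ℝ := ‖∑ w, sgn w * (ψ w : ℂ) * v w‖ with hLdef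
  have hsplit : (∑ r, ψ r) = ψ z0 + S :=
    (Finset.add_sum_erase _ _ (Finset.mem_univ z0)).symm
  have hS : 0 ≤ S := Finset.sum_nonneg fun w _ => hψ w
  have hT : 0 ≤ T := Finset.sum_nonneg fun w _ =>
    mul_nonneg (hψ w) (sq_nonneg _)
  have hB : 0 ≤ B := Finset.sum_nonneg fun w _ =>
    mul_nonneg (hψ w) (norm_nonneg _)
  have hnorm : ∀ w, ‖sgn w * (ψ w : ℂ) * v w‖ = ψ w * ‖v w‖ := by
    intro w
    rw [norm_mul, norm_mul, hsgn, one_mul, Complex.norm_real,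
      Real.norm_of_nonneg (hψ w)]
  have hL2 : ψ z0 * ‖v z0‖ - B ≤ L := by
    have hsplitC : (∑ w, sgn w * (ψ w : ℂ) * v w)
        = sgn z0 * (ψ z0 : ℂ) * v z0
          + ∑ w ∈ Finset.univ.erase z0, sgn w * (ψ w : ℂ) * v w :=
      (Finset.add_sum_erase _ _ (Finset.mem_univ z0)).symm
    have h1 : ‖sgn z0 * (ψ z0 : ℂ) * v z0‖
        - ‖∑ w ∈ Finset.univ.erase z0, sgn w * (ψ w : ℂ) * v w‖ ≤ L := by
      rw [hLdef, hsplitC]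
      have h := norm_sub_norm_le (sgn z0 * (ψ z0 : ℂ) * v z0)
        (-(∑ w ∈ Finset.univ.erase z0, sgn w * (ψ w : ℂ) * v w))
      rw [norm_neg, sub_neg_eq_add] at h
      exact h
    have h2 : ‖∑ w ∈ Finset.univ.erase z0, sgn w * (ψ w : ℂ) * v w‖ ≤ B := by
      refine le_trans (norm_sum_le _ _) ?_
      rw [hBdef]
      exact le_of_eq (Finset.sum_congr rfl fun w _ => hnorm w)
    calc ψ z0 * ‖v z0‖ - B ≤ ‖sgn z0 * (ψ z0 : ℂ) * v z0‖
          - ‖∑ w ∈ Finset.univ.erase z0, sgn w * (ψ w : ℂ) * v w‖ := by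
            rw [hnorm]; linarith
      _ ≤ L := h1
  have hCS : B ^ 2 ≤ S * T := by
    have := Finset.sum_mul_sq_le_sq_mul_sq (Finset.univ.erase z0)
      (fun w => Real.sqrt (ψ w)) (fun w => Real.sqrt (ψ w) * ‖v w‖)
    have e1 : ∀ w, Real.sqrt (ψ w) * (Real.sqrt (ψ w) * ‖v w‖) = ψ w * ‖v w‖ := by
      intro w; rw [← mul_assoc, Real.mul_self_sqrt (hψ w)]
    have e2 : ∀ w, Real.sqrt (ψ w) ^ 2 = ψ w := fun w => Real.sq_sqrt (hψ w)
    have e3 : ∀ w, (Real.sqrt (ψ w) * ‖v w‖) ^ 2 = ψ w * ‖v w‖ ^ 2 := by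
      intro w; rw [mul_pow, e2]
    calc B ^ 2 = (∑ w ∈ Finset.univ.erase z0,
          Real.sqrt (ψ w) * (Real.sqrt (ψ w) * ‖v w‖)) ^ 2 := by
          rw [hBdef]; congr 1; exact (Finset.sum_congr rfl fun w _ => (e1 w)).symm
      _ ≤ (∑ w ∈ Finset.univ.erase z0, Real.sqrt (ψ w) ^ 2)
          * ∑ w ∈ Finset.univ.erase z0, (Real.sqrt (ψ w) * ‖v w‖) ^ 2 := this
      _ = S * T := by
          rw [hSdef, hTdef]
          congr 1
          · exact Finset.sum_congr rfl fun w _ => e2 w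
          · exact Finset.sum_congr rfl fun w _ => e3 w
  have hkey := key_ineq (ψ z0) S T (ψ z0 * ‖v z0‖) B L hψ0 hS hT
    (mul_nonneg hψ0.le (norm_nonneg _)) hB (norm_nonneg _) hL2 hCS
    (by linarith)
  have hψ0' : (0:ℝ) < ψ z0 := hψ0
  rw [hsplit]
  have expand : (2 * ψ z0 - (ψ z0 + S)) * (ψ z0 * ‖v z0‖ ^ 2 - T) * ψ z0
      = (ψ z0 - S) * ((ψ z0 * ‖v z0‖) ^ 2 - ψ z0 * T) := by ring
  nlinarith [mul_le_mul_of_nonneg_right hkey hψ0'.le]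

lemma psd_bound {n : ℕ} (M : Matrix (Fin n → Bool) (Fin n → Bool) ℂ) (hM : M.PosSemidef)
    (ψ : (Fin n → Bool) → ℝ) (hψ : ∀ r, 0 ≤ ψ r)
    (hψ0 : 0 < ψ (fun _ => false))
    (hsum : (∑ r, ψ r) ≤ 2 * ψ (fun _ => false))
    (sgn : (Fin n → Bool) → ℂ) (hsgn : ∀ w, ‖sgn w‖ = 1) :
    ∑ w, ((2 * ψ (fun _ => false) - ∑ r, ψ r) *
        (if w = (fun _ => false) then ψ (fun _ => false) else - ψ w)) * (M w w).re
      ≤ ((star (fun w => sgn w * (ψ w : ℂ))) ⬝ᵥ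
          (M *ᵥ (fun w => sgn w * (ψ w : ℂ)))).re := by
  classical
  set z0 : Fin n → Bool := fun _ => false with hz0
  obtain ⟨C, rfl⟩ : ∃ C : Matrix (Fin n → Bool) (Fin n → Bool) ℂ, M = Cᴴ * C := by
    open scoped MatrixOrder in
    exact CStarAlgebra.nonneg_iff_eq_star_mul_self.mp hM.nonneg
  set Φ : (Fin n → Bool) → ℂ := fun w => sgn w * (ψ w : ℂ) with hΦ
  -- RHS = ∑ i, ‖(C *ᵥ Φ) i‖ ^ 2
  have hRHS : ((star Φ) ⬝ᵥ ((Cᴴ * C) *ᵥ Φ)).re = ∑ i, ‖(C *ᵥ Φ) i‖ ^ 2 := by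
    rw [← Matrix.mulVec_mulVec, Matrix.dotProduct_mulVec, ← Matrix.star_mulVec]
    rw [dotProduct]
    rw [Complex.re_sum]
    refine Finset.sum_congr rfl fun i _ => ?_
    simp only [Pi.star_apply, Complex.mul_re, RCLike.star_def,
      Complex.conj_re, Complex.conj_im]
    rw [Complex.sq_norm, Complex.normSq_apply]
    ring
  -- diagonal entries
  have hDiag : ∀ w, ((Cᴴ * C) w w).re = ∑ i, ‖C i w‖ ^ 2 := by
    intro w
    rw [Matrix.mul_apply, Complex.re_sum]
    refine Finset.sum_congr rfl fun i _ => ?_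
    simp only [Matrix.conjTranspose_apply, Complex.mul_re, RCLike.star_def,
      Complex.conj_re, Complex.conj_im]
    rw [Complex.sq_norm, Complex.normSq_apply]
    ring
  rw [hRHS]
  calc ∑ w, ((2 * ψ z0 - ∑ r, ψ r) * (if w = z0 then ψ z0 else - ψ w))
        * ((Cᴴ * C) w w).re
      = ∑ i, ∑ w, ((2 * ψ z0 - ∑ r, ψ r) * (if w = z0 then ψ z0 else - ψ w))
        * ‖C i w‖ ^ 2 := by
        rw [Finset.sum_comm]
        refine Finset.sum_congr rfl fun w _ => ?_
        rw [hDiag w, Finset.mul_sum]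
    _ ≤ ∑ i, ‖(C *ᵥ Φ) i‖ ^ 2 := by
        refine Finset.sum_le_sum fun i _ => ?_
        have hcore := core_ineq_s17 ψ hψ hψ0 hsum sgn hsgn (fun w => C i w)
        have hv : (C *ᵥ Φ) i = ∑ w, sgn w * (ψ w : ℂ) * C i w := by
          rw [Matrix.mulVec, dotProduct]
          exact Finset.sum_congr rfl fun w _ => by ring
        rw [hv]
        refine le_trans (le_of_eq ?_) hcore
        have hsplitw : ∀ g : (Fin n → Bool) → ℝ, (∑ w, g w) = g z0
            + ∑ w ∈ Finset.univ.erase z0, g w :=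
          fun g => (Finset.add_sum_erase _ _ (Finset.mem_univ z0)).symm
        rw [hsplitw (fun w => ((2 * ψ z0 - ∑ r, ψ r)
          * (if w = z0 then ψ z0 else - ψ w)) * ‖C i w‖ ^ 2)]
        rw [if_pos rfl]
        have herase : ∑ w ∈ Finset.univ.erase z0,
            ((2 * ψ z0 - ∑ r, ψ r) * (if w = z0 then ψ z0 else - ψ w)) * ‖C i w‖ ^ 2
            = -((2 * ψ z0 - ∑ r, ψ r) * ∑ w ∈ Finset.univ.erase z0, ψ w * ‖C i w‖ ^ 2) := by
          rw [Finset.mul_sum, ← Finset.sum_neg_distrib]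
          refine Finset.sum_congr rfl fun w hw => ?_
          rw [if_neg (Finset.ne_of_mem_erase hw)]
          ring
        rw [herase]
        ring

/-- Quantum bound for the PBR game: when `tan(θ/2) < 2^{1/n} - 1`, every POVM
`{Mₓ}` has exclusion error `∑ₓ 2^{-n} ⟨Ψₓ|Mₓ|Ψₓ⟩` at least
`2^{-n} cos(θ/2)^{2n} (2 - (1 + tan(θ/2))^n)² > 0`, so conclusive exclusion is
impossible; moreover the projective measurement `{|ζₓ⟩⟨ζₓ|}` is a valid
measurement attaining this bound with equality, and is therefore optimal. -/
theorem pbr_game_quantum_bound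
    {n : ℕ} (hn : 1 ≤ n) (θ : ℝ) (hθ0 : 0 ≤ θ) (hθ1 : θ < Real.pi / 2)
    (hθ2 : Real.tan (θ / 2) < (2 : ℝ) ^ ((n : ℝ)⁻¹) - 1)
    (Ψ ζ : (Fin n → Bool) → (Fin n → Bool) → ℂ)
    (hΨ : ∀ x r, Ψ x r = (-1 : ℂ) ^ bdot x r *
      ((Real.cos (θ / 2) ^ (n - hamming r) * Real.sin (θ / 2) ^ hamming r : ℝ) : ℂ))
    (hζ : ∀ x r, ζ x r =
      if r = (fun _ => false) then ((1 / Real.sqrt (2 ^ n) : ℝ) : ℂ)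
      else -(-1 : ℂ) ^ bdot x r * ((1 / Real.sqrt (2 ^ n) : ℝ) : ℂ)) :
    (∀ M : (Fin n → Bool) → Matrix (Fin n → Bool) (Fin n → Bool) ℂ,
      (∀ x, (M x).PosSemidef) → (∑ x, M x = 1) →
      (2 ^ n : ℝ)⁻¹ * Real.cos (θ / 2) ^ (2 * n) * (2 - (1 + Real.tan (θ / 2)) ^ n) ^ 2 ≤
        (∑ x, ((2 : ℂ) ^ n)⁻¹ * (star (Ψ x) ⬝ᵥ (M x *ᵥ Ψ x))).re) ∧
    0 < (2 ^ n : ℝ)⁻¹ * Real.cos (θ / 2) ^ (2 * n) * (2 - (1 + Real.tan (θ / 2)) ^ n) ^ 2 ∧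
    (∀ x, (Matrix.vecMulVec (ζ x) (fun q => (starRingEnd ℂ) (ζ x q))).PosSemidef) ∧
    (∑ x, Matrix.vecMulVec (ζ x) (fun q => (starRingEnd ℂ) (ζ x q)) = 1) ∧
    (∑ x, ((2 : ℂ) ^ n)⁻¹ *
        (star (Ψ x) ⬝ᵥ (Matrix.vecMulVec (ζ x) (fun q => (starRingEnd ℂ) (ζ x q)) *ᵥ Ψ x))).re =
      (2 ^ n : ℝ)⁻¹ * Real.cos (θ / 2) ^ (2 * n) * (2 - (1 + Real.tan (θ / 2)) ^ n) ^ 2 := by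
  classical
  have hπ := Real.pi_pos
  set c := Real.cos (θ / 2) with hc_def
  set s := Real.sin (θ / 2) with hs_def
  set t := Real.tan (θ / 2) with ht_def
  set ψ : (Fin n → Bool) → ℝ := fun r => c ^ (n - hamming r) * s ^ hamming r with hψ_def
  have hcpos : 0 < c := by
    rw [hc_def]
    apply Real.cos_pos_of_mem_Ioo
    constructor <;> [linarith; linarith]
  have hs0 : 0 ≤ s := by
    rw [hs_def]
    apply Real.sin_nonneg_of_nonneg_of_le_pi <;> linarith
  have ht0 : 0 ≤ t := by
    rw [ht_def, Real.tan_eq_sin_div_cos]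
    exact div_nonneg hs0 hcpos.le
  have hψpos : ∀ r, 0 ≤ ψ r := fun r =>
    mul_nonneg (pow_nonneg hcpos.le _) (pow_nonneg hs0 _)
  have hhz0 : hamming (fun _ : Fin n => false) = 0 := by simp [hamming]
  have hψz0 : ψ (fun _ => false) = c ^ n := by
    rw [hψ_def]; simp [hhz0]
  have hψ0pos : 0 < ψ (fun _ => false) := by
    rw [hψz0]; exact pow_pos hcpos n
  have hsumψ : (∑ r, ψ r) = (c + s) ^ n := by
    rw [hψ_def]
    calc (∑ r : Fin n → Bool, c ^ (n - hamming r) * s ^ hamming r)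
        = ∑ r : Fin n → Bool, ∏ i, (if r i then s else c) :=
          Finset.sum_congr rfl fun r _ => (prod_ite_eq_pow c s r).symm
      _ = ∏ _i : Fin n, (c + s) := sum_prod_bool (fun _ b => if b then s else c)
      _ = (c + s) ^ n := by rw [Finset.prod_const, Finset.card_univ, Fintype.card_fin]
  have hcs : c * (1 + t) = c + s := by
    rw [ht_def, Real.tan_eq_sin_div_cos, ← hc_def, ← hs_def]
    field_simp
  have hn0 : (n : ℝ) ≠ 0 := Nat.cast_ne_zero.mpr (by omega)
  have h2n : ((2 : ℝ) ^ ((n : ℝ)⁻¹)) ^ n = 2 := by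
    rw [← Real.rpow_natCast ((2 : ℝ) ^ ((n : ℝ)⁻¹)) n, ← Real.rpow_mul (by norm_num),
      inv_mul_cancel₀ hn0, Real.rpow_one]
  have ht2' : (1 + t) ^ n < 2 := by
    calc (1 + t) ^ n < ((2 : ℝ) ^ ((n : ℝ)⁻¹)) ^ n := by
          apply pow_lt_pow_left₀ (by linarith) (by linarith) (by omega)
      _ = 2 := h2n
  set βr : ℝ := 2 * ψ (fun _ => false) - ∑ r, ψ r with hβr_def
  have hβ : βr = c ^ n * (2 - (1 + t) ^ n) := by
    rw [hβr_def, hψz0, hsumψ, ← hcs, mul_pow]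
    ring
  have hβpos : 0 < βr := by
    rw [hβ]
    exact mul_pos (pow_pos hcpos n) (by linarith)
  have hsumle : (∑ r, ψ r) ≤ 2 * ψ (fun _ => false) := by
    rw [hβr_def] at hβpos; linarith
  have hval : (2 ^ n : ℝ)⁻¹ * c ^ (2 * n) * (2 - (1 + t) ^ n) ^ 2
      = (2 ^ n : ℝ)⁻¹ * βr ^ 2 := by
    rw [hβ, show c ^ (2 * n) = c ^ n * c ^ n by rw [two_mul, pow_add]]
    ring
  have hsplit : (∑ r, ψ r) = ψ (fun _ => false)
      + ∑ w ∈ Finset.univ.erase (fun _ => false), ψ w :=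
    (Finset.add_sum_erase _ _ (Finset.mem_univ _)).symm
  have hΨfun : ∀ x, Ψ x = fun w => (-1 : ℂ) ^ bdot x w * ((ψ w : ℝ) : ℂ) := by
    intro x; funext r; rw [hΨ x r]
  -- value of ∑ w coeff w
  have hcoeff : (∑ w : Fin n → Bool,
      βr * (if w = (fun _ => false) then ψ (fun _ => false) else - ψ w)) = βr * βr := by
    rw [← Finset.mul_sum]
    congr 1
    rw [show (∑ w : Fin n → Bool, (if w = (fun _ => false) then ψ (fun _ => false) else - ψ w))
        = (if (fun _ : Fin n => false) = (fun _ => false) then ψ (fun _ => false)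
            else - ψ (fun _ => false))
          + ∑ w ∈ Finset.univ.erase (fun _ => false),
              (if w = (fun _ => false) then ψ (fun _ => false) else - ψ w) from
      (Finset.add_sum_erase _ _ (Finset.mem_univ _)).symm]
    rw [if_pos rfl]
    rw [Finset.sum_congr rfl fun w hw => if_neg (Finset.ne_of_mem_erase hw)]
    rw [Finset.sum_neg_distrib]
    rw [hβr_def, hsplit]
    ring
  refine ⟨?_, ?_, ?_, ?_, ?_⟩
  · -- lower bound for arbitrary POVM
    intro M hMpsd hMsum
    have hsgn : ∀ (x w : Fin n → Bool), ‖(-1 : ℂ) ^ bdot x w‖ = 1 := by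
      intro x w; simp
    have hre : (∑ x, ((2 : ℂ) ^ n)⁻¹ * (star (Ψ x) ⬝ᵥ (M x *ᵥ Ψ x))).re
        = ∑ x, (2 ^ n : ℝ)⁻¹ * (star (Ψ x) ⬝ᵥ (M x *ᵥ Ψ x)).re := by
      rw [Complex.re_sum]
      refine Finset.sum_congr rfl fun x _ => ?_
      rw [show ((2 : ℂ) ^ n)⁻¹ = (((2 ^ n : ℝ)⁻¹ : ℝ) : ℂ) by
          rw [Complex.ofReal_inv]; push_cast; ring,
        Complex.re_ofReal_mul]
    rw [hre, hval]
    have hMdiag : ∀ w, (∑ x, ((M x) w w).re) = 1 := by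
      intro w
      rw [← Complex.re_sum, ← Matrix.sum_apply, hMsum, Matrix.one_apply_eq, Complex.one_re]
    have hstep : ∀ x : Fin n → Bool,
        (2 ^ n : ℝ)⁻¹ * (∑ w, (βr * (if w = (fun _ => false) then ψ (fun _ => false) else - ψ w))
            * ((M x) w w).re)
        ≤ (2 ^ n : ℝ)⁻¹ * (star (Ψ x) ⬝ᵥ (M x *ᵥ Ψ x)).re := by
      intro x
      refine mul_le_mul_of_nonneg_left ?_ (by positivity)
      have hpb := psd_bound (M x) (hMpsd x) ψ hψpos hψ0pos hsumle
        (fun w => (-1 : ℂ) ^ bdot x w) (hsgn x)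
      rw [hΨfun x]
      exact hpb
    calc (2 ^ n : ℝ)⁻¹ * βr ^ 2
        = ∑ x : Fin n → Bool, (2 ^ n : ℝ)⁻¹
            * (∑ w, (βr * (if w = (fun _ => false) then ψ (fun _ => false) else - ψ w))
              * ((M x) w w).re) := by
          rw [← Finset.mul_sum, Finset.sum_comm]
          rw [Finset.sum_congr rfl fun w (_ : w ∈ Finset.univ) => by
            rw [← Finset.mul_sum, hMdiag w, mul_one]]
          rw [hcoeff]
          ring
      _ ≤ ∑ x, (2 ^ n : ℝ)⁻¹ * (star (Ψ x) ⬝ᵥ (M x *ᵥ Ψ x)).re :=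
          Finset.sum_le_sum fun x _ => hstep x
  · -- positivity
    rw [hval]
    have : (0:ℝ) < βr ^ 2 := pow_pos hβpos 2
    positivity
  · -- PSD of ζ projectors
    intro x
    rw [Matrix.posSemidef_iff_dotProduct_mulVec]
    constructor
    · ext p q
      simp only [Matrix.conjTranspose_apply, Matrix.vecMulVec_apply, star_mul',
        RCLike.star_def, Complex.conj_conj]
      ring
    · intro y
      have hmv : (Matrix.vecMulVec (ζ x) (fun q => (starRingEnd ℂ) (ζ x q))) *ᵥ y
          = fun p => ζ x p * (∑ q, (starRingEnd ℂ) (ζ x q) * y q) := by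
        funext p
        simp [Matrix.mulVec, Matrix.vecMulVec_apply, dotProduct, Finset.mul_sum,
          mul_assoc]
      rw [hmv]
      have hstar : star (∑ q, (starRingEnd ℂ) (ζ x q) * y q)
          = ∑ p, star (y p) * ζ x p := by
        rw [star_sum]
        exact Finset.sum_congr rfl fun q _ => by
          rw [StarMul.star_mul]; simp [RCLike.star_def]
      have heq : star y ⬝ᵥ (fun p => ζ x p * (∑ q, (starRingEnd ℂ) (ζ x q) * y q))
          = star (∑ q, (starRingEnd ℂ) (ζ x q) * y q)
            * (∑ q, (starRingEnd ℂ) (ζ x q) * y q) := by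
        rw [hstar, dotProduct, Finset.sum_mul]
        exact Finset.sum_congr rfl fun p _ => by simp only [Pi.star_apply]; ring
      rw [heq]
      exact star_mul_self_nonneg _
  · -- completeness
    have hsqrt : Real.sqrt (2 ^ n) * Real.sqrt (2 ^ n) = 2 ^ n :=
      Real.mul_self_sqrt (by positivity)
    have hm2 : ((1 / Real.sqrt (2 ^ n) : ℝ) : ℂ) * ((1 / Real.sqrt (2 ^ n) : ℝ) : ℂ)
        = ((2 : ℂ) ^ n)⁻¹ := by
      rw [← Complex.ofReal_mul,
        show (1 / Real.sqrt (2 ^ n)) * (1 / Real.sqrt (2 ^ n)) = ((2:ℝ) ^ n)⁻¹ by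
          rw [div_mul_div_comm, one_mul, hsqrt, one_div]]
      rw [Complex.ofReal_inv]; push_cast; ring
    have hbz : ∀ x : Fin n → Bool, bdot x (fun _ => false) = 0 := by
      intro x; simp [bdot]
    have hζ' : ∀ x r, ζ x r = (if r = (fun _ => false) then 1 else -1)
        * (-1 : ℂ) ^ bdot x r * ((1 / Real.sqrt (2 ^ n) : ℝ) : ℂ) := by
      intro x r
      rw [hζ x r]
      by_cases h : r = (fun _ => false)
      · rw [if_pos h, if_pos h, one_mul, h, hbz x, pow_zero, one_mul]
      · rw [if_neg h, if_neg h]; ring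
    ext p q
    rw [Matrix.sum_apply]
    have hterm : ∀ x : Fin n → Bool,
        Matrix.vecMulVec (ζ x) (fun q' => (starRingEnd ℂ) (ζ x q')) p q
        = ((if p = (fun _ => false) then 1 else -1) * (if q = (fun _ => false) then 1 else -1)
            * (((1 / Real.sqrt (2 ^ n) : ℝ) : ℂ) * ((1 / Real.sqrt (2 ^ n) : ℝ) : ℂ)))
          * ((-1 : ℂ) ^ bdot x p * (-1 : ℂ) ^ bdot x q) := by
      intro x
      rw [Matrix.vecMulVec_apply, hζ' x p, hζ' x q]
      rw [_root_.map_mul, _root_.map_mul, _root_.map_pow, _root_.map_neg, _root_.map_one, Complex.conj_ofReal,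
        show (starRingEnd ℂ) (if q = (fun _ => false) then 1 else -1)
          = (if q = (fun _ => false) then (1:ℂ) else -1) by split <;> simp]
      ring
    rw [Finset.sum_congr rfl fun x _ => hterm x, ← Finset.mul_sum,
      sum_neg_one_pow_bdot p q]
    by_cases hpq : p = q
    · subst hpq
      rw [if_pos rfl, Matrix.one_apply_eq]
      have hσ : (if p = (fun _ : Fin n => false) then (1:ℂ) else -1)
          * (if p = (fun _ : Fin n => false) then (1:ℂ) else -1) = 1 := by
        split <;> norm_num
      rw [hm2]
      rw [show (if p = (fun _ : Fin n => false) then (1:ℂ) else -1)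
          * (if p = (fun _ : Fin n => false) then (1:ℂ) else -1) * ((2 : ℂ) ^ n)⁻¹
          = ((2 : ℂ) ^ n)⁻¹ by rw [hσ, one_mul]]
      exact inv_mul_cancel₀ (by positivity)
    · rw [if_neg hpq, mul_zero, Matrix.one_apply_ne hpq]
  · -- equality value
    have hsqrt : Real.sqrt (2 ^ n) * Real.sqrt (2 ^ n) = 2 ^ n :=
      Real.mul_self_sqrt (by positivity)
    have hm2 : ((1 / Real.sqrt (2 ^ n) : ℝ) : ℂ) * ((1 / Real.sqrt (2 ^ n) : ℝ) : ℂ)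
        = ((2 : ℂ) ^ n)⁻¹ := by
      rw [← Complex.ofReal_mul,
        show (1 / Real.sqrt (2 ^ n)) * (1 / Real.sqrt (2 ^ n)) = ((2:ℝ) ^ n)⁻¹ by
          rw [div_mul_div_comm, one_mul, hsqrt, one_div]]
      rw [Complex.ofReal_inv]; push_cast; ring
    have hbz : ∀ x : Fin n → Bool, bdot x (fun _ => false) = 0 := by
      intro x; simp [bdot]
    have hζ' : ∀ x r, ζ x r = (if r = (fun _ => false) then 1 else -1)
        * (-1 : ℂ) ^ bdot x r * ((1 / Real.sqrt (2 ^ n) : ℝ) : ℂ) := by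
      intro x r
      rw [hζ x r]
      by_cases h : r = (fun _ => false)
      · rw [if_pos h, if_pos h, one_mul, h, hbz x, pow_zero, one_mul]
      · rw [if_neg h, if_neg h]; ring
    have hsq1 : ∀ k : ℕ, (-1 : ℂ) ^ k * (-1 : ℂ) ^ k = 1 := by
      intro k
      rw [← pow_add, ← two_mul, pow_mul]
      norm_num
    have hconjσ : ∀ r : Fin n → Bool,
        (starRingEnd ℂ) (if r = (fun _ => false) then (1:ℂ) else -1)
        = (if r = (fun _ => false) then (1:ℂ) else -1) := by
      intro r; split <;> simp
    have hconjpow : ∀ k : ℕ, (starRingEnd ℂ) ((-1:ℂ) ^ k) = (-1:ℂ) ^ k := by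
      intro k; rw [_root_.map_pow, _root_.map_neg, _root_.map_one]
    have hconjζ : ∀ x r, (starRingEnd ℂ) (ζ x r) = ζ x r := by
      intro x r
      rw [hζ' x r, _root_.map_mul, _root_.map_mul, hconjσ, hconjpow, Complex.conj_ofReal]
    have hconjΨ : ∀ x r, (starRingEnd ℂ) (Ψ x r) = Ψ x r := by
      intro x r
      rw [hΨ x r, _root_.map_mul, hconjpow, Complex.conj_ofReal]
    -- the inner product ∑ q, conj (ζ x q) * Ψ x q = m * βr
    have hd : ∀ x : Fin n → Bool, (∑ q, (starRingEnd ℂ) (ζ x q) * Ψ x q)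
        = ((1 / Real.sqrt (2 ^ n) : ℝ) : ℂ) * ((βr : ℝ) : ℂ) := by
      intro x
      have h1 : ∀ q, (starRingEnd ℂ) (ζ x q) * Ψ x q
          = ((1 / Real.sqrt (2 ^ n) : ℝ) : ℂ)
            * (((if q = (fun _ => false) then ψ q else - ψ q) : ℝ) : ℂ) := by
        intro q
        rw [hconjζ x q, hζ' x q, hΨ x q,
          show ((c ^ (n - hamming q) * s ^ hamming q : ℝ) : ℂ) = ((ψ q : ℝ) : ℂ) from rfl]
        by_cases hq : q = (fun _ => false)
        · rw [if_pos hq, if_pos hq]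
          linear_combination (((1 / Real.sqrt (2 ^ n) : ℝ) : ℂ) * ((ψ q : ℝ) : ℂ))
            * hsq1 (bdot x q)
        · rw [if_neg hq, if_neg hq, Complex.ofReal_neg]
          linear_combination (-(((1 / Real.sqrt (2 ^ n) : ℝ) : ℂ) * ((ψ q : ℝ) : ℂ)))
            * hsq1 (bdot x q)
      rw [Finset.sum_congr rfl fun q _ => h1 q, ← Finset.mul_sum]
      congr 1
      rw [← Complex.ofReal_sum]
      congr 1
      rw [show (∑ q : Fin n → Bool, (if q = (fun _ => false) then ψ q else - ψ q))
          = (if (fun _ : Fin n => false) = (fun _ => false) then ψ (fun _ => false)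
              else - ψ (fun _ => false))
            + ∑ w ∈ Finset.univ.erase (fun _ => false),
                (if w = (fun _ => false) then ψ w else - ψ w) from
        (Finset.add_sum_erase _ _ (Finset.mem_univ _)).symm]
      rw [if_pos rfl,
        Finset.sum_congr rfl fun w hw => if_neg (Finset.ne_of_mem_erase hw),
        Finset.sum_neg_distrib, hβr_def, hsplit]
      ring
    have he : ∀ x : Fin n → Bool, (∑ p, (starRingEnd ℂ) (Ψ x p) * ζ x p)
        = ((1 / Real.sqrt (2 ^ n) : ℝ) : ℂ) * ((βr : ℝ) : ℂ) := by
      intro x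
      rw [show (∑ p, (starRingEnd ℂ) (Ψ x p) * ζ x p)
          = ∑ q, (starRingEnd ℂ) (ζ x q) * Ψ x q from
        Finset.sum_congr rfl fun q _ => by
          rw [hconjΨ x q, hconjζ x q]; ring]
      exact hd x
    have hterm : ∀ x : Fin n → Bool,
        ((2 : ℂ) ^ n)⁻¹ * (star (Ψ x) ⬝ᵥ
          (Matrix.vecMulVec (ζ x) (fun q => (starRingEnd ℂ) (ζ x q)) *ᵥ Ψ x))
        = ((2 : ℂ) ^ n)⁻¹ * (((2 : ℂ) ^ n)⁻¹ * (((βr : ℝ) : ℂ) * ((βr : ℝ) : ℂ))) := by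
      intro x
      have hmv : (Matrix.vecMulVec (ζ x) (fun q => (starRingEnd ℂ) (ζ x q))) *ᵥ Ψ x
          = fun p => ζ x p * (∑ q, (starRingEnd ℂ) (ζ x q) * Ψ x q) := by
        funext p
        simp [Matrix.mulVec, Matrix.vecMulVec_apply, dotProduct, Finset.mul_sum,
          mul_assoc]
      rw [hmv]
      have hdp : star (Ψ x) ⬝ᵥ (fun p => ζ x p * (∑ q, (starRingEnd ℂ) (ζ x q) * Ψ x q))
          = (∑ p, (starRingEnd ℂ) (Ψ x p) * ζ x p)
            * (∑ q, (starRingEnd ℂ) (ζ x q) * Ψ x q) := by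
        rw [dotProduct, Finset.sum_mul]
        exact Finset.sum_congr rfl fun p _ => by
          simp only [Pi.star_apply, RCLike.star_def]; ring
      rw [hdp, hd x, he x, ← hm2]
      ring
    rw [Finset.sum_congr rfl fun x _ => hterm x, Finset.sum_const, Finset.card_univ]
    rw [show Fintype.card (Fin n → Bool) = 2 ^ n by
      rw [Fintype.card_fun, Fintype.card_bool, Fintype.card_fin]]
    rw [nsmul_eq_mul]
    rw [show ((2 ^ n : ℕ) : ℂ) * (((2 : ℂ) ^ n)⁻¹ * (((2 : ℂ) ^ n)⁻¹ * (((βr : ℝ) : ℂ)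
        * ((βr : ℝ) : ℂ))))
        = (((2 ^ n : ℝ)⁻¹ * (βr ^ 2) : ℝ) : ℂ) by
      have h2 : ((2:ℂ) ^ n) ≠ 0 := by positivity
      push_cast
      field_simp]
    rw [Complex.ofReal_re, hval]
end

section
/- Let {ρ_i}_{i=1}^k be density matrices on a d-dimensional complex Hilbert space, prepared with probabilities p_i, and write ρ̃_i = p_i ρ_i. Suppose N is a Hermitian d×d complex matrix and a_1,…,a_k are nonnegative reals with ∑_{i=1}^k a_i ≤ 1 such that a_i ρ̃_i − N is positive semidefinite for every i. Then for every measurement (POVM) {M_i}_{i=1}^k, the worst case error satisfies max_{1≤i≤k} tr(ρ̃_i M_i) ≥ tr(N). (Weak duality for the worst case error state exclusion semidefinite program.) -/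
open Matrix BigOperators ComplexOrder

lemma psd_trace_nonneg {n : ℕ} {A : Matrix (Fin n) (Fin n) ℂ}
    (hA : A.PosSemidef) : 0 ≤ A.trace := by
  rw [Matrix.trace]
  apply Finset.sum_nonneg
  intro i _
  have := hA.dotProduct_mulVec_nonneg (Pi.single i 1)
  simpa [dotProduct, Matrix.mulVec, Pi.single_apply, Matrix.diag] using this

lemma psd_real_smul {n : ℕ} {A : Matrix (Fin n) (Fin n) ℂ} {c : ℝ}
    (hc : 0 ≤ c) (hA : A.PosSemidef) : ((c : ℂ) • A).PosSemidef := by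
  constructor
  · unfold Matrix.IsHermitian
    rw [Matrix.conjTranspose_smul, hA.1.eq]
    simp
  · exact (hA.smul (Complex.zero_le_real.2 hc)).2

open scoped MatrixOrder in
lemma psd_trace_mul_nonneg {n : ℕ} {A B : Matrix (Fin n) (Fin n) ℂ}
    (hA : A.PosSemidef) (hB : B.PosSemidef) : 0 ≤ (A * B).trace := by
  have h1 : A * B = A * (CFC.sqrt B * CFC.sqrt B) := by rw [CFC.sqrt_mul_sqrt_self B hB.nonneg]
  have h2 : (A * (CFC.sqrt B * CFC.sqrt B)).trace = (CFC.sqrt B * A * CFC.sqrt B).trace := by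
    rw [← Matrix.mul_assoc, Matrix.trace_mul_cycle]
  have h3 : (CFC.sqrt B * A * CFC.sqrt B).PosSemidef := by
    have := hA.conjTranspose_mul_mul_same (CFC.sqrt B)
    rwa [(CFC.sqrt_nonneg B).posSemidef.1.eq] at this
  rw [h1, h2]
  exact psd_trace_nonneg h3

/-- Weak duality for the worst case error state exclusion SDP. -/
theorem worst_case_exclusion_weak_duality
    {d k : ℕ} (hk : 0 < k) (ρ : Fin k → Matrix (Fin d) (Fin d) ℂ)
    (hρ : ∀ i, (ρ i).PosSemidef) (hρtr : ∀ i, (ρ i).trace = 1)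
    (p : Fin k → ℝ) (hp : ∀ i, 0 ≤ p i) (hpsum : ∑ i, p i = 1)
    (N : Matrix (Fin d) (Fin d) ℂ) (hN : N.IsHermitian)
    (a : Fin k → ℝ) (ha : ∀ i, 0 ≤ a i) (hasum : ∑ i, a i ≤ 1)
    (hfeas : ∀ i, ((a i : ℂ) • ((p i : ℂ) • ρ i) - N).PosSemidef)
    (M : Fin k → Matrix (Fin d) (Fin d) ℂ)
    (hM : ∀ i, (M i).PosSemidef) (hMsum : ∑ i, M i = 1) :
    N.trace.re ≤
      Finset.univ.sup'
        (Finset.univ_nonempty_iff.mpr (Fin.pos_iff_nonempty.mp hk))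
        (fun i => ((p i : ℂ) • ρ i * M i).trace.re) := by
  set ne : Finset.univ.Nonempty := Finset.univ_nonempty_iff.mpr (Fin.pos_iff_nonempty.mp hk)
  set S := Finset.univ.sup' ne (fun i => ((p i : ℂ) • ρ i * M i).trace.re) with hS
  -- each term is nonneg
  have hterm : ∀ i, 0 ≤ ((p i : ℂ) • ρ i * M i).trace.re := by
    intro i
    have := psd_trace_mul_nonneg (psd_real_smul (hp i) (hρ i)) (hM i)
    exact this.1
  have hS0 : 0 ≤ S := le_trans (hterm ⟨0, hk⟩) (Finset.le_sup' (f := fun i => ((p i : ℂ) • ρ i * M i).trace.re) (Finset.mem_univ _))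
  have hSle : ∀ i, ((p i : ℂ) • ρ i * M i).trace.re ≤ S :=
    fun i => Finset.le_sup' (f := fun i => ((p i : ℂ) • ρ i * M i).trace.re) (Finset.mem_univ i)
  -- key per-index bound
  have hkey : ∀ i, (N * M i).trace.re ≤ a i * S := by
    intro i
    have h0 := psd_trace_mul_nonneg (hfeas i) (hM i)
    have hexp : (((a i : ℂ) • ((p i : ℂ) • ρ i) - N) * M i).trace
        = (a i : ℂ) * ((p i : ℂ) • ρ i * M i).trace - (N * M i).trace := by
      rw [Matrix.sub_mul, Matrix.trace_sub, Matrix.smul_mul, Matrix.trace_smul, smul_eq_mul]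
    rw [hexp] at h0
    have hre := h0.1
    simp only [Complex.zero_re, Complex.sub_re, Complex.mul_re, Complex.ofReal_re,
      Complex.ofReal_im] at hre
    have : (N * M i).trace.re ≤ a i * ((p i : ℂ) • ρ i * M i).trace.re := by linarith
    calc (N * M i).trace.re ≤ a i * ((p i : ℂ) • ρ i * M i).trace.re := this
      _ ≤ a i * S := mul_le_mul_of_nonneg_left (hSle i) (ha i)
  have hNtr : N.trace = ∑ i, (N * M i).trace := by
    rw [← Matrix.trace_sum]
    congr 1
    rw [← Finset.mul_sum, hMsum, mul_one]
  calc N.trace.re = ∑ i, (N * M i).trace.re := by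
        rw [hNtr, Complex.re_sum]
    _ ≤ ∑ i, a i * S := Finset.sum_le_sum (fun i _ => hkey i)
    _ = (∑ i, a i) * S := by rw [Finset.sum_mul]
    _ ≤ 1 * S := mul_le_mul_of_nonneg_right hasum hS0
    _ = S := one_mul S
end
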